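/- The sum of the integers r_1, …, r_g equals g factorial: ∑_{i=1}^g r_i = g!. -/

import Mathlib

open Finset

/-- Iterated forward difference of a monomial: for `k ≤ m`,
`Δ^[m] (x ^ k)` is the constant `m!` if `k = m` and `0` otherwise. -/
lemma fwdDiff_iter_pow (m : ℕ) : ∀ k ≤ m,
    (fwdDiff 1)^[m] (fun x : ℕ => (x : ℤ) ^ k) = fun _ => if k = m then (Nat.factorial m : ℤ) else 0 := by
  induction m with
  | zero =>
    intro k hk
    interval_cases k
    funext x
    simp
  | succ m IH =>
    intro k hk
    rw [Function.iterate_succ_apply]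
    have hΔ : fwdDiff 1 (fun x : ℕ => (x : ℤ) ^ k)
        = ∑ i ∈ Finset.range k, (k.choose i : ℤ) • (fun x : ℕ => (x : ℤ) ^ i) := by
      funext x
      simp only [fwdDiff, Finset.sum_apply, Pi.smul_apply, smul_eq_mul]
      push_cast
      rw [add_pow, Finset.sum_range_succ]
      simp only [one_pow, mul_one, Nat.choose_self, Nat.cast_one, add_sub_cancel_right]
      exact Finset.sum_congr rfl fun i _ => by ring
    rw [hΔ, fwdDiff_iter_finset_sum]
    have hterm : ∀ i ∈ Finset.range k,
        (fwdDiff 1)^[m] ((k.choose i : ℤ) • (fun x : ℕ => (x : ℤ) ^ i))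
          = fun _ : ℕ => (k.choose i : ℤ) * (if i = m then (Nat.factorial m : ℤ) else 0) := by
      intro i hi
      rw [Finset.mem_range] at hi
      rw [fwdDiff_iter_const_smul, IH i (by omega)]
      funext x
      simp
    rw [Finset.sum_congr rfl hterm]
    funext x
    simp only [Finset.sum_apply, mul_ite, mul_zero]
    rw [Finset.sum_ite_eq' (Finset.range k) m (fun i => (k.choose i : ℤ) * (Nat.factorial m : ℤ))]
    by_cases hkm : k = m + 1
    · subst hkm
      simp only [Finset.mem_range, Nat.lt_succ_self, if_true, Nat.choose_succ_self_right,
        Nat.factorial_succ]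
      push_cast
      ring
    · have hkle : k ≤ m := by omega
      simp [hkm, Finset.mem_range, Nat.not_lt.mpr hkle]

/-- Iterated forward difference of `n ↦ C(n + c, g)` is constantly `1`. -/
lemma fwdDiff_iter_choose_add (g : ℕ) : ∀ c : ℕ,
    (fwdDiff 1)^[g] (fun n : ℕ => ((n + c).choose g : ℤ)) = fun _ => 1 := by
  induction g with
  | zero => intro c; funext n; simp
  | succ g IH =>
    intro c
    rw [Function.iterate_succ_apply]
    have hΔ : fwdDiff 1 (fun n : ℕ => ((n + c).choose (g + 1) : ℤ))
        = fun n : ℕ => ((n + c).choose g : ℤ) := by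
      funext n
      simp only [fwdDiff]
      have h1 : n + 1 + c = (n + c) + 1 := by omega
      rw [h1, Nat.choose_succ_succ' (n + c) g]
      push_cast
      ring
    rw [hΔ, IH c]

/-- With `r` defined by the recursion
`r i = i^g - (i-1)^g - ∑_{j=1}^{i-1} r j * C(g+i-j-1, g-1)` (for `i ≥ 1`),
the sum `r 1 + ⋯ + r g` equals `g!`. -/
theorem r_sum_eq_factorial (g : ℕ) (hg : 1 ≤ g) (r : ℕ → ℤ)
    (hr : ∀ i : ℕ, 1 ≤ i →
      r i = (i : ℤ) ^ g - ((i : ℤ) - 1) ^ g -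
        ∑ j ∈ Finset.Icc 1 (i - 1), r j * (Nat.choose (g + i - j - 1) (g - 1) : ℤ)) :
    ∑ i ∈ Finset.Icc 1 g, r i = (Nat.factorial g : ℤ) := by
  obtain ⟨G, hG⟩ : ∃ k, g = k + 1 := ⟨g - 1, (Nat.succ_pred_eq_of_pos hg).symm⟩
  subst hG
  -- Step 1: n^g = ∑_{j=1}^n r j * C(g+n-j, g)
  have key : ∀ n : ℕ, ((n : ℤ)) ^ (G + 1)
      = ∑ j ∈ Finset.Icc 1 n, r j * (((G + 1) + n - j).choose (G + 1) : ℤ) := by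
    intro n
    induction n with
    | zero => simp
    | succ n ih =>
      have hrn := hr (n + 1) (by omega)
      simp only [Nat.add_sub_cancel] at hrn
      have e1 : ∀ j ∈ Finset.Icc 1 n,
          r j * (((G + 1) + (n + 1) - j - 1).choose G : ℤ)
            = r j * (((G + 1) + n - j).choose G : ℤ) := by
        intro j hj
        rw [Finset.mem_Icc] at hj
        have h2 : (G + 1) + (n + 1) - j - 1 = (G + 1) + n - j := by omega
        rw [h2]
      rw [Finset.sum_congr rfl e1] at hrn
      rw [Finset.sum_Icc_succ_top (by omega : 1 ≤ n + 1)]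
      have e2 : (G + 1) + (n + 1) - (n + 1) = G + 1 := by omega
      rw [e2, Nat.choose_self]
      have e3 : ∀ j ∈ Finset.Icc 1 n,
          r j * (((G + 1) + (n + 1) - j).choose (G + 1) : ℤ)
            = r j * (((G + 1) + n - j).choose (G + 1) : ℤ)
              + r j * (((G + 1) + n - j).choose G : ℤ) := by
        intro j hj
        rw [Finset.mem_Icc] at hj
        have h4 : (G + 1) + (n + 1) - j = ((G + 1) + n - j) + 1 := by omega
        rw [h4, Nat.choose_succ_succ' ((G + 1) + n - j) G]
        push_cast
        ring
      rw [Finset.sum_congr rfl e3, Finset.sum_add_distrib]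
      push_cast at hrn ⊢
      have h5 : ((n : ℤ) + 1 - 1) = (n : ℤ) := by ring
      rw [h5] at hrn
      linarith [hrn, ih]
  -- Step 2: for n ≤ G+1, n^(G+1) = ∑_{j=1}^{G+1} r j * C(n + (G+1-j), G+1)
  have key2 : ∀ n ∈ Finset.range ((G + 1) + 1),
      ((n : ℤ)) ^ (G + 1)
        = (∑ j ∈ Finset.Icc 1 (G + 1),
            r j • (fun n : ℕ => ((n + ((G + 1) - j)).choose (G + 1) : ℤ))) n := by
    intro n hn
    rw [Finset.mem_range] at hn
    simp only [Finset.sum_apply, Pi.smul_apply, smul_eq_mul]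
    rw [key n]
    have hsub : Finset.Icc 1 n ⊆ Finset.Icc 1 (G + 1) := Finset.Icc_subset_Icc_right (by omega)
    rw [← Finset.sum_subset hsub (fun j hjg hjn => ?_)]
    · refine Finset.sum_congr rfl fun j hj => ?_
      rw [Finset.mem_Icc] at hj
      have h6 : n + ((G + 1) - j) = (G + 1) + n - j := by omega
      rw [h6]
    · rw [Finset.mem_Icc] at hjg
      rw [Finset.mem_Icc] at hjn
      have h7 : n + ((G + 1) - j) < G + 1 := by omega
      rw [Nat.choose_eq_zero_of_lt h7]
      simp
  -- conclude by applying the (G+1)-th forward difference at 0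
  have hFG : (fwdDiff 1)^[G + 1] (fun n : ℕ => ((n : ℤ)) ^ (G + 1)) 0
      = (fwdDiff 1)^[G + 1] (∑ j ∈ Finset.Icc 1 (G + 1),
          r j • (fun n : ℕ => ((n + ((G + 1) - j)).choose (G + 1) : ℤ))) 0 := by
    rw [fwdDiff_iter_eq_sum_shift, fwdDiff_iter_eq_sum_shift]
    refine Finset.sum_congr rfl fun k hk => ?_
    have h0 : (0 : ℕ) + k • 1 = k := by simp
    rw [h0, key2 k hk]
  have hL : (fwdDiff 1)^[G + 1] (fun n : ℕ => ((n : ℤ)) ^ (G + 1)) 0 = (Nat.factorial (G + 1) : ℤ) := by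
    rw [fwdDiff_iter_pow (G + 1) (G + 1) le_rfl]
    simp
  have hR : (fwdDiff 1)^[G + 1] (∑ j ∈ Finset.Icc 1 (G + 1),
        r j • (fun n : ℕ => ((n + ((G + 1) - j)).choose (G + 1) : ℤ))) 0
      = ∑ i ∈ Finset.Icc 1 (G + 1), r i := by
    rw [fwdDiff_iter_finset_sum]
    simp only [Finset.sum_apply]
    refine Finset.sum_congr rfl fun j hj => ?_
    rw [fwdDiff_iter_const_smul, fwdDiff_iter_choose_add]
    simp
  rw [← hR, ← hFG, hL]
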